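/- Let f(λ,z) = (1/z)·g((ln z − ln λ − m)/√Σ)/√Σ be the lognormal density of Z^x = x e^Y with Y ~ N(m,Σ), viewed as a function of x = λ > 0 (g the standard normal density). Then the k-th partial derivative in x satisfies ∇_x^k f(x,z) = [Σ_{i=0}^{k} a_i^k d(x,z)^i] f(x,z)/x^k, where d(x,z) = (ln z − ln x − m)/Σ and the coefficients satisfy the recursion a_i^0 = 1_{i=0}, a_i^{j+1} = a_{i−1}^j − j a_i^j − ((i+1)/Σ) a_{i+1}^j, with a_i^j = 0 for i < 0 or i > j. -/

import Mathlib

open Real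

open Finset in
lemma key_sum (Sig : ℝ) (a : ℕ → ℕ → ℝ)
    (harec : ∀ j i, a (j + 1) i =
      (if i = 0 then 0 else a j (i - 1)) - j * a j i - ((i + 1) / Sig) * a j (i + 1))
    (hvan : ∀ j i, j < i → a j i = 0) (k : ℕ) (D : ℝ) :
    ∑ i ∈ range (k + 2), a (k + 1) i * D ^ i
      = D * (∑ i ∈ range (k + 1), a k i * D ^ i)
        - k * (∑ i ∈ range (k + 1), a k i * D ^ i)
        - (∑ i ∈ range (k + 1), a k i * ((i : ℝ) * D ^ (i - 1))) / Sig := by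
  have hsplit : ∀ i ∈ range (k + 2), a (k + 1) i * D ^ i =
      (if i = 0 then 0 else a k (i - 1)) * D ^ i - (k : ℝ) * a k i * D ^ i
        - ((i + 1) / Sig) * a k (i + 1) * D ^ i := by
    intro i _
    rw [harec]; ring
  rw [Finset.sum_congr rfl hsplit]
  rw [Finset.sum_sub_distrib, Finset.sum_sub_distrib]
  congr 1
  · congr 1
    · rw [Finset.sum_range_succ' (fun i => (if i = 0 then 0 else a k (i - 1)) * D ^ i) (k + 1)]
      simp only [Nat.succ_ne_zero, if_false, eq_self_iff_true, if_true, Nat.add_sub_cancel,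
        pow_zero, zero_mul, mul_one, add_zero]
      rw [Finset.mul_sum]
      exact Finset.sum_congr rfl fun i _ => by ring
    · rw [Finset.sum_range_succ, Finset.mul_sum, hvan k (k + 1) (by omega)]
      simp only [mul_zero, zero_mul, add_zero]
      exact Finset.sum_congr rfl fun i _ => by ring
  · rw [Finset.sum_range_succ, Finset.sum_range_succ, hvan k (k + 1) (by omega),
      hvan k (k + 2) (by omega)]
    simp only [mul_zero, zero_mul, add_zero]
    rw [Finset.sum_range_succ' (fun i => a k i * ((i : ℝ) * D ^ (i - 1))) k]
    simp only [Nat.cast_zero, zero_mul, mul_zero, add_zero, Nat.add_sub_cancel]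
    rw [Finset.sum_div]
    refine Finset.sum_congr rfl fun i _ => ?_
    push_cast
    ring


/-- for the lognormal density
f(x,z) = (1/(z√(2πΣ))) exp(−(ln z − ln x − m)²/(2Σ)) of Z^x = x e^Y, Y ~ N(m,Σ),
the k-th derivative in x satisfies
∇ₓᵏ f(x,z) = [Σ_{i=0}^k aᵢᵏ d(x,z)ⁱ] f(x,z)/xᵏ with d(x,z) = (ln z − ln x − m)/Σ and
coefficients given by a_i^0 = 1_{i=0},
a_i^{j+1} = a_{i−1}^j − j a_i^j − ((i+1)/Σ) a_{i+1}^j (zero outside 0 ≤ i ≤ j). -/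
theorem lognormal_density_derivatives (m Sig : ℝ) (hSig : 0 < Sig)
    (a : ℕ → ℕ → ℝ)
    (ha0 : ∀ i, a 0 i = if i = 0 then 1 else 0)
    (harec : ∀ j i, a (j + 1) i =
      (if i = 0 then 0 else a j (i - 1)) - j * a j i - ((i + 1) / Sig) * a j (i + 1)) :
    ∀ k : ℕ, ∀ x : ℝ, 0 < x → ∀ z : ℝ, 0 < z →
      iteratedDeriv k
          (fun x' => (1 / (z * Real.sqrt (2 * π * Sig))) *
            Real.exp (-(Real.log z - Real.log x' - m) ^ 2 / (2 * Sig))) x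
        = (∑ i ∈ Finset.range (k + 1),
            a k i * ((Real.log z - Real.log x - m) / Sig) ^ i) *
          ((1 / (z * Real.sqrt (2 * π * Sig))) *
            Real.exp (-(Real.log z - Real.log x - m) ^ 2 / (2 * Sig))) / x ^ k := by
  have hvan : ∀ j i, j < i → a j i = 0 := by
    intro j
    induction j with
    | zero =>
      intro i hi
      rw [ha0, if_neg (by omega)]
    | succ j ih =>
      intro i hi
      rw [harec, if_neg (by omega), ih i (by omega), ih (i - 1) (by omega),
        ih (i + 1) (by omega)]
      ring
  intro k
  induction k with
  | zero =>
    intro x hx z hz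
    simp [iteratedDeriv_zero, ha0]
  | succ k ih =>
    intro x hx z hz
    set C : ℝ := 1 / (z * Real.sqrt (2 * π * Sig)) with hC
    set L : ℝ := Real.log z with hL
    set f : ℝ → ℝ := fun x' => C * Real.exp (-(L - Real.log x' - m) ^ 2 / (2 * Sig)) with hfdef
    set d : ℝ → ℝ := fun x' => (L - Real.log x' - m) / Sig with hddef
    set g : ℝ → ℝ := fun x' =>
      (∑ i ∈ Finset.range (k + 1), a k i * d x' ^ i) * f x' / x' ^ k with hgdef
    rw [iteratedDeriv_succ]
    have hev : iteratedDeriv k f =ᶠ[nhds x] g := by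
      filter_upwards [IsOpen.mem_nhds isOpen_Ioi hx] with y hy
      exact ih y hy z hz
    rw [hev.deriv_eq]
    -- derivatives at x
    have hxne : x ≠ 0 := ne_of_gt hx
    have hlog : HasDerivAt Real.log x⁻¹ x := Real.hasDerivAt_log hxne
    have hinner : HasDerivAt (fun x' => L - Real.log x' - m) (-x⁻¹) x :=
      (hlog.const_sub L).sub_const m
    have hd : HasDerivAt d (-(x⁻¹ / Sig)) x := by
      have := hinner.div_const Sig
      simpa [hddef, neg_div] using this
    have hf : HasDerivAt f (f x * d x / x) x := by
      have hu : HasDerivAt (fun x' => -(L - Real.log x' - m) ^ 2 / (2 * Sig))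
          (-(2 * (L - Real.log x - m) ^ 1 * (-x⁻¹)) / (2 * Sig)) x :=
        ((hinner.pow 2).neg).div_const (2 * Sig)
      have : HasDerivAt (fun y => C * Real.exp (-(L - Real.log y - m) ^ 2 / (2 * Sig))) _ x :=
        (hu.exp).const_mul C
      convert this using 1
      simp only [hfdef, hddef]
      field_simp
    have hS : HasDerivAt (fun x' => ∑ i ∈ Finset.range (k + 1), a k i * d x' ^ i)
        ((∑ i ∈ Finset.range (k + 1), a k i * ((i : ℝ) * d x ^ (i - 1))) * (-(x⁻¹ / Sig))) x := by
      have : HasDerivAt (fun x' => ∑ i ∈ Finset.range (k + 1), a k i * d x' ^ i)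
          (∑ i ∈ Finset.range (k + 1), a k i * ((i : ℝ) * d x ^ (i - 1) * (-(x⁻¹ / Sig)))) x :=
        HasDerivAt.fun_sum fun i _ => (hd.pow i).const_mul (a k i)
      convert this using 1
      rw [Finset.sum_mul]
      exact Finset.sum_congr rfl fun i _ => by ring
    have hN : HasDerivAt (fun x' => (∑ i ∈ Finset.range (k + 1), a k i * d x' ^ i) * f x')
        ((∑ i ∈ Finset.range (k + 1), a k i * ((i : ℝ) * d x ^ (i - 1))) * (-(x⁻¹ / Sig)) * f x
          + (∑ i ∈ Finset.range (k + 1), a k i * d x ^ i) * (f x * d x / x)) x := hS.mul hf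
    have hg : HasDerivAt g
        ((((∑ i ∈ Finset.range (k + 1), a k i * ((i : ℝ) * d x ^ (i - 1))) * (-(x⁻¹ / Sig)) * f x
            + (∑ i ∈ Finset.range (k + 1), a k i * d x ^ i) * (f x * d x / x)) * x ^ k
          - ((∑ i ∈ Finset.range (k + 1), a k i * d x ^ i) * f x) * ((k : ℝ) * x ^ (k - 1)))
          / (x ^ k) ^ 2) x :=
      hN.div (hasDerivAt_pow k x) (pow_ne_zero k hxne)
    rw [hg.deriv]
    -- now pure algebra
    have hkey := key_sum Sig a harec hvan k (d x)
    set S := ∑ i ∈ Finset.range (k + 1), a k i * d x ^ i with hSdef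
    set T := ∑ i ∈ Finset.range (k + 1), a k i * ((i : ℝ) * d x ^ (i - 1)) with hTdef
    show _ = (∑ i ∈ Finset.range (k + 1 + 1), a (k + 1) i * d x ^ i) * f x / x ^ (k + 1)
    rw [hkey]
    have hpow' : (k : ℝ) * x ^ (k - 1) = (k : ℝ) * x ^ k / x := by
      rcases Nat.eq_zero_or_pos k with h | h
      · simp [h]
      · rw [eq_div_iff hxne]
        cases k with
        | zero => omega
        | succ n => simp [pow_succ]; ring
    rw [hpow']
    have hSne : Sig ≠ 0 := ne_of_gt hSig
    field_simp
    ring
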